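/- Given a locally finite arrow configuration ψ on ℤ (each vertex i has finitely many right-arrows and left-arrows), an edge configuration pairing each right-arrow at some vertex i with a left-arrow at some vertex j > i is nested (contains no two crossing edges, where edges (i,j) and (i',j') cross if i < i' < j < j') if and only if it is obtained by the stepwise pairing algorithm: for n = 1, 2, ..., successively perform all possible connections between vertices at distance n. -/

import Mathlib

open scoped ENNReal

/-- The pair of residual (yet unconnected) right- and left-arrow counts after
step `n` of the stepwise pairing algorithm applied to the arrow configuration
with `R i` right-arrows and `L i` left-arrows at each vertex `i ∈ ℤ`: at step
`n`, all possible connections between vertices at distance `n` are performed. -/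
def resid (R L : ℤ → ℕ) : ℕ → (ℤ → ℕ) × (ℤ → ℕ)
  | 0 => (R, L)
  | n + 1 =>
    let p := resid R L n
    (fun i => p.1 i - min (p.1 i) (p.2 (i + ((n : ℤ) + 1))),
     fun j => p.2 j - min (p.1 (j - ((n : ℤ) + 1))) (p.2 j))

/-- The number of edges between the vertices `i` and `i + d` created at step
`d ≥ 1` of the stepwise pairing algorithm. -/
def stepEdges (R L : ℤ → ℕ) (d : ℕ) (i : ℤ) : ℕ :=
  min ((resid R L (d - 1)).1 i) ((resid R L (d - 1)).2 (i + (d : ℤ)))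

lemma resid_fst_succ (R L : ℤ → ℕ) (n : ℕ) (i : ℤ) :
    (resid R L (n+1)).1 i
      = (resid R L n).1 i - min ((resid R L n).1 i) ((resid R L n).2 (i + ((n:ℤ)+1))) := rfl

lemma resid_snd_succ (R L : ℤ → ℕ) (n : ℕ) (j : ℤ) :
    (resid R L (n+1)).2 j
      = (resid R L n).2 j - min ((resid R L n).1 (j - ((n:ℤ)+1))) ((resid R L n).2 j) := rfl

lemma resid_fst_anti (R L : ℤ → ℕ) (i : ℤ) {m n : ℕ} (h : m ≤ n) :
    (resid R L n).1 i ≤ (resid R L m).1 i := by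
  induction n, h using Nat.le_induction with
  | base => exact le_rfl
  | succ n hmn ih => exact le_trans (by rw [resid_fst_succ]; exact Nat.sub_le _ _) ih

lemma resid_snd_anti (R L : ℤ → ℕ) (j : ℤ) {m n : ℕ} (h : m ≤ n) :
    (resid R L n).2 j ≤ (resid R L m).2 j := by
  induction n, h using Nat.le_induction with
  | base => exact le_rfl
  | succ n hmn ih => exact le_trans (by rw [resid_snd_succ]; exact Nat.sub_le _ _) ih

lemma resid_min_zero (R L : ℤ → ℕ) {d n : ℕ} (hd : 1 ≤ d) (hdn : d ≤ n) (i : ℤ) :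
    min ((resid R L n).1 i) ((resid R L n).2 (i + (d:ℤ))) = 0 := by
  obtain ⟨e, rfl⟩ : ∃ e, d = e + 1 := ⟨d - 1, by omega⟩
  have h0 : min ((resid R L (e+1)).1 i) ((resid R L (e+1)).2 (i + ((e:ℤ)+1))) = 0 := by
    rw [resid_fst_succ, resid_snd_succ]
    have h : i + ((e:ℤ)+1) - ((e:ℤ)+1) = i := by ring
    rw [h]
    omega
  have h1 := resid_fst_anti R L i hdn
  have h2 := resid_snd_anti R L (i + ((e:ℤ)+1)) hdn
  have hc : ((e+1 : ℕ) : ℤ) = (e:ℤ)+1 := by push_cast; ring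
  rw [hc]
  omega

lemma resid_fst_add_sum (R L : ℤ → ℕ) (n : ℕ) (i : ℤ) :
    (resid R L n).1 i + ∑ k ∈ Finset.Icc 1 n, stepEdges R L k i = R i := by
  induction n with
  | zero => simp [resid]
  | succ n ih =>
    rw [Finset.sum_Icc_succ_top (by omega)]
    have hs : stepEdges R L (n+1) i
        = min ((resid R L n).1 i) ((resid R L n).2 (i + ((n:ℤ)+1))) := by
      unfold stepEdges
      norm_num
    rw [resid_fst_succ, hs]
    omega

lemma resid_snd_add_sum (R L : ℤ → ℕ) (n : ℕ) (j : ℤ) :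
    (resid R L n).2 j + ∑ k ∈ Finset.Icc 1 n, stepEdges R L k (j - (k:ℤ)) = L j := by
  induction n with
  | zero => simp [resid]
  | succ n ih =>
    rw [Finset.sum_Icc_succ_top (by omega)]
    have hs : stepEdges R L (n+1) (j - ((n+1:ℕ):ℤ))
        = min ((resid R L n).1 (j - ((n:ℤ)+1))) ((resid R L n).2 j) := by
      unfold stepEdges
      norm_num
    rw [resid_snd_succ, hs]
    omega

/-- Section 5, uniqueness of the nested configuration: given an arrow
configuration on `ℤ` (with `R i` right-arrows and `L i` left-arrows at vertex
`i`), an edge configuration `c` (where `c i j` is the number of edges from `i`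
to `j > i`) pairing each right-arrow with a left-arrow to its right and
exhausting all arrows is nested — contains no two crossing edges `(i,j)`,
`(i',j')` with `i < i' < j < j'` — if and only if it is the configuration
obtained by the stepwise pairing algorithm. -/
theorem nested_iff_stepwise (R L : ℤ → ℕ) (c : ℤ → ℤ → ℕ)
    (hsupp : ∀ i j : ℤ, c i j ≠ 0 → i < j)
    (hR : ∀ i : ℤ, ∑' j : ℤ, (c i j : ℝ≥0∞) = (R i : ℝ≥0∞))
    (hL : ∀ j : ℤ, ∑' i : ℤ, (c i j : ℝ≥0∞) = (L j : ℝ≥0∞)) :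
    (∀ i i' j j' : ℤ, i < i' → i' < j → j < j' → c i j ≠ 0 → c i' j' ≠ 0 → False)
      ↔ ∀ i j : ℤ, i < j → c i j = stepEdges R L (j - i).toNat i := by
  constructor
  · -- nested → stepwise
    intro hnest
    have main : ∀ d : ℕ, 1 ≤ d → ∀ i : ℤ, c i (i + (d:ℤ)) = stepEdges R L d i := by
      intro d
      induction d using Nat.strong_induction_on with
      | _ d IH =>
        intro hd i
        obtain ⟨e, rfl⟩ : ∃ e, d = e + 1 := ⟨d - 1, by omega⟩
        set j : ℤ := i + ((e:ℤ)+1) with hj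
        have hA' : ∑ k ∈ Finset.Icc 1 e, c i (i + (k:ℤ))
            = ∑ k ∈ Finset.Icc 1 e, stepEdges R L k i := by
          apply Finset.sum_congr rfl
          intro k hk
          simp only [Finset.mem_Icc] at hk
          exact IH k (by omega) hk.1 i
        have hB' : ∑ k ∈ Finset.Icc 1 e, c (j - (k:ℤ)) j
            = ∑ k ∈ Finset.Icc 1 e, stepEdges R L k (j - (k:ℤ)) := by
          apply Finset.sum_congr rfl
          intro k hk
          simp only [Finset.mem_Icc] at hk
          have := IH k (by omega) hk.1 (j - (k:ℤ))
          rwa [show j - (k:ℤ) + (k:ℤ) = j by ring] at this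
        have hrA := resid_fst_add_sum R L e i
        have hrB := resid_snd_add_sum R L e j
        have hAeq : ∑ k ∈ Finset.Icc 1 (e+1), c i (i + (k:ℤ))
            = ∑ j' ∈ Finset.Icc (i+1) (i + ((e:ℤ)+1)), c i j' := by
          refine Finset.sum_nbij' (fun k : ℕ => i + (k:ℤ)) (fun j' : ℤ => (j' - i).toNat)
            ?_ ?_ ?_ ?_ ?_
          · intro k hk; simp only [Finset.mem_Icc] at *; omega
          · intro j' hj'; simp only [Finset.mem_Icc] at *; omega
          · intro k hk; simp only [Finset.mem_Icc] at hk; omega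
          · intro j' hj'; simp only [Finset.mem_Icc] at hj'; omega
          · intro k hk; rfl
        have hBeq : ∑ k ∈ Finset.Icc 1 (e+1), c (j - (k:ℤ)) j
            = ∑ i' ∈ Finset.Icc (j - ((e:ℤ)+1)) (j-1), c i' j := by
          refine Finset.sum_nbij' (fun k : ℕ => j - (k:ℤ)) (fun i' : ℤ => (j - i').toNat)
            ?_ ?_ ?_ ?_ ?_
          · intro k hk; simp only [Finset.mem_Icc] at *; omega
          · intro i' hi'; simp only [Finset.mem_Icc] at *; omega
          · intro k hk; simp only [Finset.mem_Icc] at hk; omega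
          · intro i' hi'; simp only [Finset.mem_Icc] at hi'; omega
          · intro k hk; rfl
        have hAsplit : ∑ k ∈ Finset.Icc 1 (e+1), c i (i + (k:ℤ))
            = (∑ k ∈ Finset.Icc 1 e, c i (i + (k:ℤ))) + c i j := by
          rw [Finset.sum_Icc_succ_top (by omega)]
          congr 2 <;> push_cast
        have hBsplit : ∑ k ∈ Finset.Icc 1 (e+1), c (j - (k:ℤ)) j
            = (∑ k ∈ Finset.Icc 1 e, c (j - (k:ℤ)) j) + c i j := by
          rw [Finset.sum_Icc_succ_top (by omega)]
          congr 2
          omega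
        have hcastA : ((∑ j' ∈ Finset.Icc (i+1) (i + ((e:ℤ)+1)), c i j' : ℕ) : ℝ≥0∞)
            = ∑ j' ∈ Finset.Icc (i+1) (i + ((e:ℤ)+1)), (c i j' : ℝ≥0∞) := by push_cast; rfl
        have hAle : (∑ j' ∈ Finset.Icc (i+1) (i + ((e:ℤ)+1)), c i j') ≤ R i := by
          have := ENNReal.sum_le_tsum (f := fun j' => (c i j' : ℝ≥0∞))
            (Finset.Icc (i+1) (i + ((e:ℤ)+1)))
          rw [hR i] at this
          rw [← hcastA] at this
          exact_mod_cast this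
        have hcastB : ((∑ i' ∈ Finset.Icc (j - ((e:ℤ)+1)) (j-1), c i' j : ℕ) : ℝ≥0∞)
            = ∑ i' ∈ Finset.Icc (j - ((e:ℤ)+1)) (j-1), (c i' j : ℝ≥0∞) := by push_cast; rfl
        have hBle : (∑ i' ∈ Finset.Icc (j - ((e:ℤ)+1)) (j-1), c i' j) ≤ L j := by
          have := ENNReal.sum_le_tsum (f := fun i' => (c i' j : ℝ≥0∞))
            (Finset.Icc (j - ((e:ℤ)+1)) (j-1))
          rw [hL j] at this
          rw [← hcastB] at this
          exact_mod_cast this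
        have hgreedy : ¬ ((∑ j' ∈ Finset.Icc (i+1) (i + ((e:ℤ)+1)), c i j') < R i ∧
            (∑ i' ∈ Finset.Icc (j - ((e:ℤ)+1)) (j-1), c i' j) < L j) := by
          rintro ⟨hA, hB⟩
          have hAex : ∃ j', j' ∉ Finset.Icc (i+1) (i + ((e:ℤ)+1)) ∧ c i j' ≠ 0 := by
            by_contra hcon
            push_neg at hcon
            have := tsum_eq_sum (L := SummationFilter.unconditional ℤ) (s := Finset.Icc (i+1) (i + ((e:ℤ)+1)))
              (f := fun j' => (c i j' : ℝ≥0∞)) (by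
                intro b hb
                simp [hcon b hb])
            rw [hR i, ← hcastA] at this
            exact absurd (Nat.cast_injective this) (by omega)
          have hBex : ∃ i', i' ∉ Finset.Icc (j - ((e:ℤ)+1)) (j-1) ∧ c i' j ≠ 0 := by
            by_contra hcon
            push_neg at hcon
            have := tsum_eq_sum (L := SummationFilter.unconditional ℤ) (s := Finset.Icc (j - ((e:ℤ)+1)) (j-1))
              (f := fun i' => (c i' j : ℝ≥0∞)) (by
                intro b hb
                simp [hcon b hb])
            rw [hL j, ← hcastB] at this
            exact absurd (Nat.cast_injective this) (by omega)
          obtain ⟨j', hj'mem, hj'⟩ := hAex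
          obtain ⟨i', hi'mem, hi'⟩ := hBex
          simp only [Finset.mem_Icc] at hj'mem hi'mem
          have hlt1 : i < j' := hsupp _ _ hj'
          have hlt2 : i' < j := hsupp _ _ hi'
          have hjj' : j < j' := by omega
          have hii' : i' < i := by omega
          exact hnest i' i j j' hii' (by omega) hjj' hi' hj'
        have hcleA : c i j ≤ (resid R L e).1 i := by omega
        have hcleB : c i j ≤ (resid R L e).2 j := by omega
        have hstep : stepEdges R L (e+1) i
            = min ((resid R L e).1 i) ((resid R L e).2 j) := by
          unfold stepEdges
          norm_num
          rw [hj]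
        rw [show i + ((e+1:ℕ):ℤ) = j by push_cast; ring, hstep]
        omega
    intro i j hij
    have h1 : 1 ≤ (j - i).toNat := by omega
    have := main _ h1 i
    rwa [show i + (((j - i).toNat : ℕ) : ℤ) = j by omega] at this
  · -- stepwise → nested
    intro h i i' j j' h1 h2 h3 hc hc'
    rw [h i j (by omega)] at hc
    rw [h i' j' (by omega)] at hc'
    unfold stepEdges at hc hc'
    rw [show i + ((j - i).toNat : ℤ) = j by omega] at hc
    set d := (j - i).toNat with hdd
    set d' := (j' - i').toNat with hdd'
    set e := (j - i').toNat with hee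
    have he1 : 1 ≤ e := by omega
    set n := min (d - 1) (d' - 1) with hnn
    have hen : e ≤ n := by omega
    have h0 : min ((resid R L n).1 i') ((resid R L n).2 (i' + (e:ℤ))) = 0 :=
      resid_min_zero R L he1 hen i'
    rw [show i' + (e:ℤ) = j by omega] at h0
    have m1 := resid_fst_anti R L i' (show n ≤ d' - 1 by omega)
    have m2 := resid_snd_anti R L j (show n ≤ d - 1 by omega)
    omega
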